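/- Let 0 < q < 1, let λ > 0 be real, and let ν be a real number with ν > −1. Then for all x > 0, the q-derivative at x of the function G(x) := x^{ν+1}·J_{ν+1}^{(2)}(λx | q²) / ( λ·(−x²λ²(1−q)²; q²)_∞ ) equals x^{ν+1}·J_ν^{(2)}(λx | q²) / (−x²λ²(1−q)²; q²)_∞. -/

import Mathlib

/-- The Jackson `q`-derivative `(D_q f)(x) = (f(x) - f(qx)) / ((1-q)x)`. -/
noncomputable def qDeriv (q : ℝ) (f : ℝ → ℝ) (x : ℝ) : ℝ :=
  (f x - f (q * x)) / ((1 - q) * x)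

/-- The finite q-shifted factorial `(z; q)_n`. -/
noncomputable def qPoch (z q : ℝ) (n : ℕ) : ℝ :=
  ∏ k ∈ Finset.range n, (1 - z * q ^ k)

/-- The infinite q-shifted factorial `(z; q)_∞`. -/
noncomputable def qPochInf (z q : ℝ) : ℝ :=
  ∏' k : ℕ, (1 - z * q ^ k)

/-- The second Jackson q-Bessel function in the notation
`J_ν^{(2)}(λx | q²) = J_ν^{(2)}(2λx(1−q); q²)`. -/
noncomputable def J2 (q ν lam x : ℝ) : ℝ :=
  (qPochInf (q ^ (2 * ν + 2)) (q ^ 2) / qPochInf (q ^ 2) (q ^ 2)) *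
    ∑' n : ℕ, ((-1 : ℝ) ^ n * q ^ (2 * (n : ℝ) * ((n : ℝ) + ν)) *
        (lam * x * (1 - q)) ^ (2 * (n : ℝ) + ν)) /
      (qPoch (q ^ 2) (q ^ 2) n *
        ∏ j ∈ Finset.range n, (1 - q ^ (2 * ν + 2 + 2 * (j : ℝ))))

section QBesselAux
open Finset Real

lemma my_abs_log_le {c t : ℝ} (hc : -1 < c) (ht0 : |t| ≤ |c|) (ht1 : min 1 (1+c) ≤ 1 + t) :
    |Real.log (1 + t)| ≤ |t| / min 1 (1+c) := by
  set m := min 1 (1+c) with hm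
  have hm0 : 0 < m := lt_min one_pos (by linarith)
  have hmt : 0 < 1 + t := lt_of_lt_of_le hm0 ht1
  rcases le_or_gt 0 t with h | h
  · have h1 : Real.log (1 + t) ≤ t := by
      have := Real.log_le_sub_one_of_pos hmt
      linarith
    have h2 : 0 ≤ Real.log (1 + t) := Real.log_nonneg (by linarith)
    rw [abs_of_nonneg h2, abs_of_nonneg h]
    calc Real.log (1+t) ≤ t := h1
      _ ≤ t / m := by
        rw [le_div_iff₀ hm0]
        nlinarith [min_le_left 1 (1+c)]
  · have h2 : Real.log (1 + t) ≤ 0 := Real.log_nonpos (by linarith) (by linarith)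
    rw [abs_of_nonpos h2, abs_of_neg h]
    have h3 : Real.log (1+t) = - Real.log (1/(1+t)) := by
      rw [Real.log_div one_ne_zero (ne_of_gt hmt), Real.log_one]; ring
    rw [h3, neg_neg]
    have h4 : Real.log (1/(1+t)) ≤ 1/(1+t) - 1 := Real.log_le_sub_one_of_pos (by positivity)
    have h5 : 1/(1+t) - 1 = (-t)/(1+t) := by field_simp; ring
    calc Real.log (1/(1+t)) ≤ (-t)/(1+t) := by rw [← h5]; exact h4
      _ ≤ (-t)/m := by
        apply div_le_div_of_nonneg_left (by linarith) hm0 ht1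

lemma my_factor_pos {c r : ℝ} (hc : -1 < c) (hr0 : 0 ≤ r) (hr1 : r ≤ 1) (k : ℕ) :
    min 1 (1+c) ≤ 1 + c * r ^ k := by
  have hrk0 : 0 ≤ r ^ k := pow_nonneg hr0 k
  have hrk1 : r ^ k ≤ 1 := pow_le_one₀ hr0 hr1
  rcases le_or_gt 0 c with h | h
  · have : 0 ≤ c * r ^ k := mul_nonneg h hrk0
    calc min 1 (1+c) ≤ 1 := min_le_left _ _
      _ ≤ 1 + c * r^k := by linarith
  · have : c ≤ c * r ^ k := by nlinarith
    calc min 1 (1+c) ≤ 1 + c := min_le_right _ _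
      _ ≤ 1 + c * r^k := by linarith

lemma my_multipliable {c r : ℝ} (hc : -1 < c) (hr0 : 0 ≤ r) (hr1 : r < 1) :
    Multipliable (fun k : ℕ => 1 + c * r ^ k) := by
  have hm0 : 0 < min 1 (1+c) := lt_min one_pos (by linarith)
  have hpos : ∀ k : ℕ, 0 < 1 + c * r ^ k := fun k =>
    lt_of_lt_of_le hm0 (my_factor_pos hc hr0 hr1.le k)
  have hsum : Summable (fun k : ℕ => Real.log (1 + c * r ^ k)) := by
    apply Summable.of_abs
    refine Summable.of_nonneg_of_le (fun k => abs_nonneg _) (fun k => ?_)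
      ((summable_geometric_of_lt_one hr0 hr1).mul_left (|c| / min 1 (1+c)))
    have h1 : |c * r ^ k| ≤ |c| := by
      rw [abs_mul]
      calc |c| * |r ^ k| ≤ |c| * 1 := by
            apply mul_le_mul_of_nonneg_left _ (abs_nonneg c)
            rw [abs_pow, abs_of_nonneg hr0]; exact pow_le_one₀ hr0 hr1.le
        _ = |c| := mul_one _
    have h2 := my_abs_log_le hc h1 (my_factor_pos hc hr0 hr1.le k)
    calc |Real.log (1 + c * r ^ k)| ≤ |c * r ^ k| / min 1 (1+c) := h2
      _ = |c| / min 1 (1+c) * r ^ k := by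
          rw [abs_mul, abs_pow, abs_of_nonneg hr0]; ring
  refine ⟨Real.exp (∑' k, Real.log (1 + c * r ^ k)), ?_⟩
  have h1 : HasProd (Real.exp ∘ fun k : ℕ => Real.log (1 + c * r ^ k))
      (Real.exp (∑' k, Real.log (1 + c * r ^ k))) := hsum.hasSum.rexp
  have h2 : (Real.exp ∘ fun k : ℕ => Real.log (1 + c * r ^ k))
      = fun k : ℕ => 1 + c * r ^ k := by
    funext b
    simp only [Function.comp_apply]
    rw [Real.exp_log (hpos b)]
  rwa [h2] at h1

lemma my_tprod_pos {c r : ℝ} (hc : 0 ≤ c) (hr0 : 0 ≤ r) (hr1 : r < 1) :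
    1 ≤ ∏' k : ℕ, (1 + c * r ^ k) := by
  have hm := my_multipliable (c := c) (r := r) (by linarith) hr0 hr1
  refine ge_of_tendsto' hm.hasProd.tendsto_prod_nat ?_
  intro n
  calc (1:ℝ) = ∏ _i ∈ Finset.range n, 1 := by simp
    _ ≤ ∏ i ∈ Finset.range n, (1 + c * r ^ i) := by
        apply Finset.prod_le_prod
        · intros; norm_num
        · intro i _; nlinarith [pow_nonneg hr0 i]

lemma my_tprod_shift {c r : ℝ} (hc : -1 < c) (hr0 : 0 ≤ r) (hr1 : r < 1) :
    ∏' k : ℕ, (1 + c * r ^ k) = (1 + c) * ∏' k : ℕ, (1 + (c * r) * r ^ k) := by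
  have hcr : -1 < c * r := by nlinarith
  have hm : Multipliable (fun k : ℕ => (1:ℝ) + c * r ^ (k + 1)) := by
    refine (my_multipliable hcr hr0 hr1).congr (fun b => ?_)
    rw [pow_succ']
    ring
  rw [tprod_eq_zero_mul' (f := fun k : ℕ => 1 + c * r ^ k) hm]
  simp only [pow_zero, mul_one]
  congr 1
  apply tprod_congr
  intro k
  rw [pow_succ']
  ring

lemma my_summable_shape {Q Y : ℝ} (B : ℝ) (hQ0 : 0 < Q) (hQ1 : Q < 1) (hY : 0 < Y)
    (hYQ : Y * Q < 1) :
    Summable (fun n : ℕ => B ^ n * Q ^ (n ^ 2) /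
      ((∏ k ∈ Finset.range n, (1 - Q ^ (k+1))) * ∏ j ∈ Finset.range n, (1 - Y * Q ^ (j+1)))) := by
  have hα : ∀ n : ℕ, 0 < 1 - Q ^ (n+1) := by
    intro n
    have : Q ^ (n+1) ≤ Q ^ 1 := pow_le_pow_of_le_one hQ0.le hQ1.le (by omega)
    simp only [pow_one] at this
    linarith
  have hβ : ∀ n : ℕ, 0 < 1 - Y * Q ^ (n+1) := by
    intro n
    have h1 : Q ^ (n+1) ≤ Q ^ 1 := pow_le_pow_of_le_one hQ0.le hQ1.le (by omega)
    simp only [pow_one] at h1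
    nlinarith
  have hP1 : ∀ n : ℕ, 0 < ∏ k ∈ Finset.range n, (1 - Q ^ (k+1)) :=
    fun n => Finset.prod_pos (fun k _ => hα k)
  have hP2 : ∀ n : ℕ, 0 < ∏ j ∈ Finset.range n, (1 - Y * Q ^ (j+1)) :=
    fun n => Finset.prod_pos (fun j _ => hβ j)
  set f : ℕ → ℝ := fun n => B ^ n * Q ^ (n ^ 2) /
      ((∏ k ∈ Finset.range n, (1 - Q ^ (k+1))) * ∏ j ∈ Finset.range n, (1 - Y * Q ^ (j+1)))
    with hf
  have hnorm : ∀ n : ℕ, ‖f n‖ = |B| ^ n * Q ^ (n ^ 2) /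
      ((∏ k ∈ Finset.range n, (1 - Q ^ (k+1))) * ∏ j ∈ Finset.range n, (1 - Y * Q ^ (j+1))) := by
    intro n
    rw [hf]
    simp only [Real.norm_eq_abs]
    rw [abs_div, abs_mul, abs_pow, abs_pow, abs_of_pos hQ0,
      abs_of_pos (mul_pos (hP1 n) (hP2 n))]
  set D : ℝ := (1 - Q) * (1 - Y * Q) with hD
  have hDpos : 0 < D := mul_pos (by linarith) (by linarith)
  set C : ℝ := |B| * Q / D with hC
  have hratio : ∀ n : ℕ, ‖f (n+1)‖ =
      (|B| * Q ^ (2*n+1) / ((1 - Q ^ (n+1)) * (1 - Y * Q ^ (n+1)))) * ‖f n‖ := by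
    intro n
    rw [hnorm, hnorm]
    rw [Finset.prod_range_succ, Finset.prod_range_succ, div_mul_div_comm]
    rw [div_eq_div_iff
      (ne_of_gt (mul_pos (mul_pos (hP1 n) (hα n)) (mul_pos (hP2 n) (hβ n))))
      (ne_of_gt (mul_pos (mul_pos (hα n) (hβ n)) (mul_pos (hP1 n) (hP2 n))))]
    ring
  have htend : Filter.Tendsto (fun n : ℕ => C * (Q^2) ^ n) Filter.atTop (nhds 0) := by
    have := tendsto_pow_atTop_nhds_zero_of_lt_one (by positivity : (0:ℝ) ≤ Q^2)
      (by nlinarith : Q^2 < 1)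
    simpa using this.const_mul C
  have hev : ∀ᶠ n : ℕ in Filter.atTop, C * (Q^2)^n < 1/2 :=
    htend.eventually_lt_const (by norm_num)
  apply summable_of_ratio_norm_eventually_le (r := 1/2) (by norm_num)
  filter_upwards [hev] with n hn
  rw [hratio n]
  apply mul_le_mul_of_nonneg_right _ (norm_nonneg _)
  have hb : |B| * Q ^ (2*n+1) / ((1 - Q ^ (n+1)) * (1 - Y * Q ^ (n+1))) ≤ C * (Q^2)^n := by
    have hd1 : 1 - Q ≤ 1 - Q ^ (n+1) := by
      have : Q ^ (n+1) ≤ Q ^ 1 := pow_le_pow_of_le_one hQ0.le hQ1.le (by omega)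
      simp only [pow_one] at this; linarith
    have hd2 : 1 - Y * Q ≤ 1 - Y * Q ^ (n+1) := by
      have : Q ^ (n+1) ≤ Q ^ 1 := pow_le_pow_of_le_one hQ0.le hQ1.le (by omega)
      simp only [pow_one] at this; nlinarith
    have hDle : D ≤ (1 - Q ^ (n+1)) * (1 - Y * Q ^ (n+1)) := by
      rw [hD]
      apply mul_le_mul hd1 hd2 (by linarith) (hα n).le
    have hnum : (0:ℝ) ≤ |B| * Q ^ (2*n+1) := by positivity
    calc |B| * Q ^ (2*n+1) / ((1 - Q ^ (n+1)) * (1 - Y * Q ^ (n+1)))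
        ≤ |B| * Q ^ (2*n+1) / D := by
          apply div_le_div_of_nonneg_left hnum hDpos hDle
      _ = C * (Q^2)^n := by
          rw [hC]
          field_simp
          ring
    
  linarith [hb, hn]

lemma my_keyn {X Q w : ℝ} (hX0 : 0 < X) (hX1 : X < 1) (hQ0 : 0 < Q) (hQ1 : Q < 1)
    (hw : 0 < w) (n : ℕ) :
    ((-(X*w))^(n+1) * Q^((n+1)^2) /
        ((∏ k ∈ range (n+1), (1 - Q^(k+1))) * ∏ j ∈ range (n+1), (1 - X*Q^(j+1))))
    - X * ((-(X*Q*w))^(n+1) * Q^((n+1)^2)) /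
        ((∏ k ∈ range (n+1), (1 - Q^(k+1))) * ∏ j ∈ range (n+1), (1 - X*Q^(j+1)))
    - w * (X * ((-(X*Q*w))^n * Q^(n^2)) /
        ((∏ k ∈ range n, (1 - Q^(k+1))) * ∏ j ∈ range n, (1 - X*Q^(j+1))))
    = (1-X) * ((-(X*w/Q))^(n+1) * Q^((n+1)^2) /
        ((∏ k ∈ range (n+1), (1 - Q^(k+1))) * ∏ j ∈ range (n+1), (1 - X*Q^j))) := by
  have hQn : ∀ m : ℕ, Q ^ m ≤ 1 := fun m => pow_le_one₀ hQ0.le hQ1.le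
  have hα : ∀ m : ℕ, 0 < 1 - Q ^ (m+1) := by
    intro m
    have : Q^(m+1) ≤ Q^1 := pow_le_pow_of_le_one hQ0.le hQ1.le (by omega)
    simp only [pow_one] at this
    have : Q^(m+1) < 1 := lt_of_le_of_lt this hQ1
    linarith
  have hβ : ∀ m : ℕ, 0 < 1 - X * Q ^ m := by
    intro m
    nlinarith [hQn m, pow_pos hQ0 m]
  have hP1 : ∀ m : ℕ, (0:ℝ) < ∏ k ∈ range m, (1 - Q^(k+1)) :=
    fun m => Finset.prod_pos fun k _ => hα k
  have hPX : ∀ m : ℕ, (0:ℝ) < ∏ j ∈ range m, (1 - X*Q^(j+1)) :=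
    fun m => Finset.prod_pos fun j _ => hβ (j+1)
  have hPE : ∀ m : ℕ, (0:ℝ) < ∏ j ∈ range m, (1 - X*Q^j) :=
    fun m => Finset.prod_pos fun j _ => hβ j
  have hrel : ∀ m : ℕ, (1-X) * ∏ j ∈ range m, (1 - X*Q^(j+1))
      = (1 - X*Q^m) * ∏ j ∈ range m, (1 - X*Q^j) := by
    intro m
    induction m with
    | zero => simp
    | succ m ih =>
        rw [Finset.prod_range_succ, Finset.prod_range_succ]
        linear_combination (1 - X*Q^(m+1)) * ih
  -- expand succ products
  rw [Finset.prod_range_succ, Finset.prod_range_succ, Finset.prod_range_succ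
    (f := fun j => 1 - X*Q^j)]
  have hPEn : (∏ j ∈ range n, (1 - X*Q^j))
      = (1-X) * (∏ j ∈ range n, (1 - X*Q^(j+1))) / (1 - X*Q^n) := by
    rw [eq_div_iff (hβ n).ne']
    linarith [hrel n]
  rw [hPEn]
  have h1 := (hP1 n).ne'
  have h2 := (hPX n).ne'
  have h3 := (hα n).ne'
  have h4 := (hβ (n+1)).ne'
  have h5 := (hβ n).ne'
  have h6 : (1:ℝ) - X ≠ 0 := by linarith
  have h7 : Q ≠ 0 := hQ0.ne'
  field_simp
  rw [neg_pow (X*w/Q), div_pow]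
  field_simp
  ring

lemma my_core {q ν w : ℝ} (hq : 0 < q) (hq1 : q < 1) (hν : -1 < ν) (hw : 0 < w) :
    (∑' n : ℕ, ((-1:ℝ)^n * q ^ (2*(n:ℝ)*((n:ℝ)+ν+1)) * w^n /
        (qPoch (q^2) (q^2) n * ∏ j ∈ Finset.range n, (1 - q ^ (2*ν+4+2*(j:ℝ))))))
    - (1 + w) * (∑' n : ℕ, ((-1:ℝ)^n * q ^ (2*(n:ℝ)*((n:ℝ)+ν+1)+2*(n:ℝ)+2*ν+2) * w^n /
        (qPoch (q^2) (q^2) n * ∏ j ∈ Finset.range n, (1 - q ^ (2*ν+4+2*(j:ℝ))))))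
    = (1 - q ^ (2*ν+2)) * ∑' n : ℕ, ((-1:ℝ)^n * q ^ (2*(n:ℝ)*((n:ℝ)+ν)) * w^n /
        (qPoch (q^2) (q^2) n * ∏ j ∈ Finset.range n, (1 - q ^ (2*ν+2+2*(j:ℝ))))) := by
  set X : ℝ := q ^ (2*ν+2) with hXdef
  set Q : ℝ := q ^ 2 with hQdef
  have hX0 : 0 < X := Real.rpow_pos_of_pos hq _
  have hX1 : X < 1 := Real.rpow_lt_one hq.le hq1 (by linarith)
  have hQ0 : 0 < Q := by positivity
  have hQ1 : Q < 1 := by nlinarith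
  have hQne : Q ≠ 0 := hQ0.ne'
  -- conversion of rpow exponents
  have hXQ : ∀ a b : ℕ, q ^ ((2*ν+2)*(a:ℝ) + 2*(b:ℝ)) = X ^ a * Q ^ b := by
    intro a b
    rw [Real.rpow_add hq]
    congr 1
    · rw [hXdef, ← Real.rpow_natCast (q ^ (2*ν+2)) a, ← Real.rpow_mul hq.le]
    · rw [hQdef, show (2:ℝ)*(b:ℝ) = ((2*b : ℕ):ℝ) by push_cast; ring,
        Real.rpow_natCast, pow_mul]
  -- sequence definitions
  set s1 : ℕ → ℝ := fun n => ((-1:ℝ)^n * q ^ (2*(n:ℝ)*((n:ℝ)+ν+1)) * w^n /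
      (qPoch (q^2) (q^2) n * ∏ j ∈ Finset.range n, (1 - q ^ (2*ν+4+2*(j:ℝ))))) with hs1
  set s2 : ℕ → ℝ := fun n => ((-1:ℝ)^n * q ^ (2*(n:ℝ)*((n:ℝ)+ν+1)+2*(n:ℝ)+2*ν+2) * w^n /
      (qPoch (q^2) (q^2) n * ∏ j ∈ Finset.range n, (1 - q ^ (2*ν+4+2*(j:ℝ))))) with hs2
  set sh : ℕ → ℝ := fun n => ((-1:ℝ)^n * q ^ (2*(n:ℝ)*((n:ℝ)+ν)) * w^n /
      (qPoch (q^2) (q^2) n * ∏ j ∈ Finset.range n, (1 - q ^ (2*ν+2+2*(j:ℝ))))) with hsh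
  -- denominator conversions
  have hqP : ∀ m : ℕ, qPoch (q^2) (q^2) m = ∏ k ∈ range m, (1 - Q^(k+1)) := by
    intro m
    unfold qPoch
    refine Finset.prod_congr rfl (fun k _ => ?_)
    rw [hQdef, pow_succ']
    ring
  have hprod4 : ∀ m : ℕ, (∏ j ∈ Finset.range m, (1 - q ^ (2*ν+4+2*(j:ℝ))))
      = ∏ j ∈ range m, (1 - X*Q^(j+1)) := by
    intro m
    refine Finset.prod_congr rfl (fun j _ => ?_)
    congr 1
    have := hXQ 1 (j+1)
    rw [pow_one] at this
    rw [← this]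
    congr 1
    push_cast
    ring
  have hprod2 : ∀ m : ℕ, (∏ j ∈ Finset.range m, (1 - q ^ (2*ν+2+2*(j:ℝ))))
      = ∏ j ∈ range m, (1 - X*Q^j) := by
    intro m
    refine Finset.prod_congr rfl (fun j _ => ?_)
    congr 1
    have := hXQ 1 j
    rw [pow_one] at this
    rw [← this]
    congr 1
    push_cast
    ring
  -- numerator conversions
  have hnum1 : ∀ m : ℕ, (-1:ℝ)^m * q ^ (2*(m:ℝ)*((m:ℝ)+ν+1)) * w^m
      = (-(X*w))^m * Q^(m^2) := by
    intro m
    have : q ^ (2*(m:ℝ)*((m:ℝ)+ν+1)) = X^m * Q^(m^2) := by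
      rw [← hXQ m (m^2)]
      congr 1
      push_cast
      ring
    rw [this, neg_pow (X*w) m, mul_pow]
    ring
  have hnum2 : ∀ m : ℕ, (-1:ℝ)^m * q ^ (2*(m:ℝ)*((m:ℝ)+ν+1)+2*(m:ℝ)+2*ν+2) * w^m
      = X * ((-(X*Q*w))^m * Q^(m^2)) := by
    intro m
    have : q ^ (2*(m:ℝ)*((m:ℝ)+ν+1)+2*(m:ℝ)+2*ν+2) = X^(m+1) * Q^(m^2+m) := by
      rw [← hXQ (m+1) (m^2+m)]
      congr 1
      push_cast
      ring
    rw [this, neg_pow (X*Q*w) m, mul_pow, mul_pow, pow_succ, pow_add]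
    ring
  have hnumh : ∀ m : ℕ, (-1:ℝ)^m * q ^ (2*(m:ℝ)*((m:ℝ)+ν)) * w^m
      = (-(X*w/Q))^m * Q^(m^2) := by
    intro m
    have h1 : q ^ (2*(m:ℝ)*((m:ℝ)+ν)) * Q^m = X^m * Q^(m^2) := by
      rw [hQdef, show ((q:ℝ)^2)^m = q ^ ((2*m:ℕ):ℝ) by
        rw [Real.rpow_natCast, pow_mul], ← Real.rpow_add hq, ← hXQ m (m^2)]
      congr 1
      push_cast
      ring
    have h2 : q ^ (2*(m:ℝ)*((m:ℝ)+ν)) = X^m * Q^(m^2) / Q^m := by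
      rw [eq_div_iff (pow_ne_zero m hQne)]
      exact h1
    rw [h2, neg_pow (X*w/Q) m, div_pow, mul_pow]
    ring
  -- pointwise conversions to canonical form
  have conv1 : ∀ m : ℕ, s1 m = (-(X*w))^m * Q^(m^2) /
      ((∏ k ∈ range m, (1 - Q^(k+1))) * ∏ j ∈ range m, (1 - X*Q^(j+1))) := by
    intro m
    rw [hs1]
    simp only
    rw [hnum1, hqP, hprod4]
  have conv2 : ∀ m : ℕ, s2 m = X * ((-(X*Q*w))^m * Q^(m^2)) /
      ((∏ k ∈ range m, (1 - Q^(k+1))) * ∏ j ∈ range m, (1 - X*Q^(j+1))) := by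
    intro m
    rw [hs2]
    simp only
    rw [hnum2, hqP, hprod4]
  have convh : ∀ m : ℕ, sh m = (-(X*w/Q))^m * Q^(m^2) /
      ((∏ k ∈ range m, (1 - Q^(k+1))) * ∏ j ∈ range m, (1 - X*Q^j)) := by
    intro m
    rw [hsh]
    simp only
    rw [hnumh, hqP, hprod2]
  -- summability
  have hXQlt : X * Q < 1 := by nlinarith
  have hsum1 : Summable s1 := by
    refine (my_summable_shape (-(X*w)) hQ0 hQ1 hX0 hXQlt).congr (fun m => ?_)
    rw [conv1 m]
  have hsum2 : Summable s2 := by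
    refine ((my_summable_shape (-(X*Q*w)) hQ0 hQ1 hX0 hXQlt).mul_left X).congr (fun m => ?_)
    rw [conv2 m]
    ring
  have hXdQ : 0 < X / Q := by positivity
  have hXdQ1 : (X/Q) * Q < 1 := by
    rw [div_mul_cancel₀ _ hQne]
    exact hX1
  have hsumh : Summable sh := by
    refine ((my_summable_shape (-(X*w/Q)) hQ0 hQ1 hXdQ hXdQ1).congr (fun m => ?_))
    rw [convh m]
    congr 2
    refine Finset.prod_congr rfl (fun j _ => ?_)
    rw [pow_succ]
    field_simp
    try ring
  -- key identities
  have key0 : s1 0 - s2 0 = (1 - X) * sh 0 := by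
    rw [conv1, conv2, convh]
    norm_num
  have keyn : ∀ n : ℕ, (s1 (n+1) - s2 (n+1)) - w * s2 n = (1-X) * sh (n+1) := by
    intro n
    rw [conv1, conv2, conv2, convh]
    exact my_keyn hX0 hX1 hQ0 hQ1 hw n
  -- assemble
  have hF : Summable (fun n => s1 n - s2 n) := hsum1.sub hsum2
  have e1 : (∑' n, s1 n) - (1+w) * (∑' n, s2 n)
      = (∑' n, (s1 n - s2 n)) - ∑' n, (w * s2 n) := by
    rw [Summable.tsum_sub hsum1 hsum2, tsum_mul_left]
    ring
  rw [e1]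
  rw [Summable.tsum_eq_zero_add hF]
  have e2 : (1 - X) * (∑' n, sh n) = (1-X) * sh 0 + ∑' n, ((1-X) * sh (n+1)) := by
    rw [← tsum_mul_left, Summable.tsum_eq_zero_add (hsumh.mul_left (1-X))]
  rw [e2]
  have e3 : (∑' n, (s1 (n+1) - s2 (n+1))) - (∑' n, (w * s2 n))
      = ∑' n, ((1-X) * sh (n+1)) := by
    rw [← Summable.tsum_sub ((summable_nat_add_iff 1).2 hF) (hsum2.mul_left w)]
    exact tsum_congr keyn
  linarith [key0, e3]

lemma qPochInf_eq (z Q : ℝ) : qPochInf z Q = ∏' k : ℕ, (1 + (-z) * Q ^ k) := by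
  unfold qPochInf
  exact tprod_congr fun k => by ring

end QBesselAux

/-- `∫ x^{ν+1}/(−x²λ²(1−q)²;q²)_∞ · J_ν^{(2)}(λx|q²) d_q x
  = x^{ν+1} J_{ν+1}^{(2)}(λx|q²)/(λ(−x²λ²(1−q)²;q²)_∞)`. -/
theorem qIntegral_J2_nu (q lam ν : ℝ) (hq : 0 < q) (hq1 : q < 1)
    (hlam : 0 < lam) (hν : -1 < ν) :
    ∀ x : ℝ, 0 < x →
      qDeriv q
        (fun t => t ^ (ν + 1) * J2 q (ν + 1) lam t /
          (lam * qPochInf (-(t ^ 2 * lam ^ 2 * (1 - q) ^ 2)) (q ^ 2))) x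
      = x ^ (ν + 1) * J2 q ν lam x /
          qPochInf (-(x ^ 2 * lam ^ 2 * (1 - q) ^ 2)) (q ^ 2) := by
  intro x hx
  by_cases hQi : qPochInf (q^2) (q^2) = 0
  · simp [qDeriv, J2, hQi]
  have h1q : (0:ℝ) < 1 - q := by linarith
  have hq2 : (0:ℝ) < q^2 := by positivity
  have hq21 : q^2 < 1 := by nlinarith
  simp only [qDeriv, J2]
  set u : ℝ := lam * x * (1 - q) with hu
  have hupos : 0 < u := by rw [hu]; positivity
  have hw : (0:ℝ) < u^2 := by positivity
  -- infinite product identities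
  have hPx : qPochInf (-(x^2*lam^2*(1-q)^2)) (q^2)
      = (1+u^2) * qPochInf (-((q*x)^2*lam^2*(1-q)^2)) (q^2) := by
    rw [qPochInf_eq, qPochInf_eq]
    rw [show -(-(x^2*lam^2*(1-q)^2)) = u^2 by rw [hu]; ring]
    rw [show -(-((q*x)^2*lam^2*(1-q)^2)) = u^2*q^2 by rw [hu]; ring]
    exact my_tprod_shift (by nlinarith) hq2.le hq21
  have hPq1 : (1:ℝ) ≤ qPochInf (-((q*x)^2*lam^2*(1-q)^2)) (q^2) := by
    rw [qPochInf_eq]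
    rw [show -(-((q*x)^2*lam^2*(1-q)^2)) = u^2*q^2 by rw [hu]; ring]
    exact my_tprod_pos (by positivity) hq2.le hq21
  have hPqpos : (0:ℝ) < qPochInf (-((q*x)^2*lam^2*(1-q)^2)) (q^2) :=
    lt_of_lt_of_le one_pos hPq1
  have hX0 : (0:ℝ) < q ^ (2*ν+2) := Real.rpow_pos_of_pos hq _
  have hX1 : q ^ (2*ν+2) < 1 := Real.rpow_lt_one hq.le hq1 (by linarith)
  have hA : qPochInf (q ^ (2*ν+2)) (q^2)
      = (1 - q ^ (2*ν+2)) * qPochInf (q ^ (2*(ν+1)+2)) (q^2) := by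
    have h2 : q ^ (2*(ν+1)+2) = q ^ (2*ν+2) * q^2 := by
      rw [← Real.rpow_natCast q 2, ← Real.rpow_add hq]
      congr 1
      push_cast
      ring
    have h3 : (∏' k:ℕ, (1 + (-(q ^ (2*ν+2)) * q^2) * (q^2)^k))
        = ∏' k:ℕ, (1 + (-(q ^ (2*(ν+1)+2))) * (q^2)^k) :=
      tprod_congr fun k => by rw [h2]; ring
    rw [qPochInf_eq, qPochInf_eq,
      my_tprod_shift (c := -(q ^ (2*ν+2))) (r := q^2) (by linarith) hq2.le hq21, h3]
    rw [show (1:ℝ) + -(q ^ (2*ν+2)) = 1 - q ^ (2*ν+2) by ring]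
  -- series conversions
  have husplit : ∀ (n : ℕ) (μ : ℝ), u ^ (2*(n:ℝ)+μ) = u ^ μ * (u^2)^n := by
    intro n μ
    rw [Real.rpow_add hupos, mul_comm]
    congr 1
    rw [show (2:ℝ)*(n:ℝ) = ((2*n:ℕ):ℝ) by push_cast; ring, Real.rpow_natCast, pow_mul]
  have step1 : ∀ n : ℕ,
      ((-1:ℝ)^n * q ^ (2*(n:ℝ)*((n:ℝ)+(ν+1))) * u ^ (2*(n:ℝ)+(ν+1))) /
        (qPoch (q^2) (q^2) n * ∏ j ∈ Finset.range n, (1 - q ^ (2*(ν+1)+2+2*(j:ℝ))))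
      = u^(ν+1) * ((-1:ℝ)^n * q ^ (2*(n:ℝ)*((n:ℝ)+ν+1)) * (u^2)^n /
        (qPoch (q^2) (q^2) n * ∏ j ∈ Finset.range n, (1 - q ^ (2*ν+4+2*(j:ℝ))))) := by
    intro n
    rw [show (2:ℝ)*(n:ℝ)*((n:ℝ)+(ν+1)) = 2*(n:ℝ)*((n:ℝ)+ν+1) by ring]
    rw [show (∏ j ∈ Finset.range n, (1 - q ^ (2*(ν+1)+2+2*(j:ℝ))))
        = ∏ j ∈ Finset.range n, (1 - q ^ (2*ν+4+2*(j:ℝ))) from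
      Finset.prod_congr rfl fun j _ => by
        rw [show 2*(ν+1)+2+2*(j:ℝ) = 2*ν+4+2*(j:ℝ) by ring]]
    rw [husplit n (ν+1)]
    ring
  have R1 : (∑' n : ℕ,
      ((-1:ℝ)^n * q ^ (2*(n:ℝ)*((n:ℝ)+(ν+1))) * u ^ (2*(n:ℝ)+(ν+1))) /
        (qPoch (q^2) (q^2) n * ∏ j ∈ Finset.range n, (1 - q ^ (2*(ν+1)+2+2*(j:ℝ)))))
      = u^(ν+1) * ∑' n : ℕ, ((-1:ℝ)^n * q ^ (2*(n:ℝ)*((n:ℝ)+ν+1)) * (u^2)^n /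
        (qPoch (q^2) (q^2) n * ∏ j ∈ Finset.range n, (1 - q ^ (2*ν+4+2*(j:ℝ))))) := by
    rw [← tsum_mul_left]
    exact tsum_congr step1
  have hqx : lam * (q * x) * (1 - q) = q * u := by rw [hu]; ring
  have hqnu : (0:ℝ) < q ^ (ν+1) := Real.rpow_pos_of_pos hq _
  have step2 : ∀ n : ℕ, q^(ν+1) *
      (((-1:ℝ)^n * q ^ (2*(n:ℝ)*((n:ℝ)+(ν+1))) * (lam * (q*x) * (1-q)) ^ (2*(n:ℝ)+(ν+1))) /
        (qPoch (q^2) (q^2) n * ∏ j ∈ Finset.range n, (1 - q ^ (2*(ν+1)+2+2*(j:ℝ)))))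
      = u^(ν+1) * ((-1:ℝ)^n * q ^ (2*(n:ℝ)*((n:ℝ)+ν+1)+2*(n:ℝ)+2*ν+2) * (u^2)^n /
        (qPoch (q^2) (q^2) n * ∏ j ∈ Finset.range n, (1 - q ^ (2*ν+4+2*(j:ℝ))))) := by
    intro n
    rw [hqx, Real.mul_rpow hq.le hupos.le]
    rw [show (∏ j ∈ Finset.range n, (1 - q ^ (2*(ν+1)+2+2*(j:ℝ))))
        = ∏ j ∈ Finset.range n, (1 - q ^ (2*ν+4+2*(j:ℝ))) from
      Finset.prod_congr rfl fun j _ => by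
        rw [show 2*(ν+1)+2+2*(j:ℝ) = 2*ν+4+2*(j:ℝ) by ring]]
    rw [husplit n (ν+1)]
    have hqq : q^(ν+1) * (q ^ (2*(n:ℝ)*((n:ℝ)+(ν+1))) * q ^ (2*(n:ℝ)+(ν+1)))
        = q ^ (2*(n:ℝ)*((n:ℝ)+ν+1)+2*(n:ℝ)+2*ν+2) := by
      rw [← Real.rpow_add hq, ← Real.rpow_add hq]
      congr 1
      ring
    calc q^(ν+1) * (((-1:ℝ)^n * q ^ (2*(n:ℝ)*((n:ℝ)+(ν+1))) *
            (q ^ (2*(n:ℝ)+(ν+1)) * (u^(ν+1) * (u^2)^n))) /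
          (qPoch (q^2) (q^2) n * ∏ j ∈ Finset.range n, (1 - q ^ (2*ν+4+2*(j:ℝ)))))
        = (q^(ν+1) * (q ^ (2*(n:ℝ)*((n:ℝ)+(ν+1))) * q ^ (2*(n:ℝ)+(ν+1)))) *
            ((-1:ℝ)^n * (u^(ν+1) * (u^2)^n)) /
          (qPoch (q^2) (q^2) n * ∏ j ∈ Finset.range n, (1 - q ^ (2*ν+4+2*(j:ℝ)))) := by
          ring
      _ = u^(ν+1) * ((-1:ℝ)^n * q ^ (2*(n:ℝ)*((n:ℝ)+ν+1)+2*(n:ℝ)+2*ν+2) * (u^2)^n /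
          (qPoch (q^2) (q^2) n * ∏ j ∈ Finset.range n, (1 - q ^ (2*ν+4+2*(j:ℝ))))) := by
          rw [hqq]
          ring
  have R2 : (∑' n : ℕ,
      ((-1:ℝ)^n * q ^ (2*(n:ℝ)*((n:ℝ)+(ν+1))) * (lam * (q*x) * (1-q)) ^ (2*(n:ℝ)+(ν+1))) /
        (qPoch (q^2) (q^2) n * ∏ j ∈ Finset.range n, (1 - q ^ (2*(ν+1)+2+2*(j:ℝ)))))
      = u^(ν+1) * (∑' n : ℕ, ((-1:ℝ)^n * q ^ (2*(n:ℝ)*((n:ℝ)+ν+1)+2*(n:ℝ)+2*ν+2) * (u^2)^n /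
        (qPoch (q^2) (q^2) n * ∏ j ∈ Finset.range n, (1 - q ^ (2*ν+4+2*(j:ℝ)))))) / q^(ν+1) := by
    rw [eq_div_iff hqnu.ne', mul_comm _ (q^(ν+1)), ← tsum_mul_left]
    rw [← tsum_mul_left]
    exact tsum_congr step2
  have step3 : ∀ n : ℕ,
      ((-1:ℝ)^n * q ^ (2*(n:ℝ)*((n:ℝ)+ν)) * u ^ (2*(n:ℝ)+ν)) /
        (qPoch (q^2) (q^2) n * ∏ j ∈ Finset.range n, (1 - q ^ (2*ν+2+2*(j:ℝ))))
      = u^ν * ((-1:ℝ)^n * q ^ (2*(n:ℝ)*((n:ℝ)+ν)) * (u^2)^n /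
        (qPoch (q^2) (q^2) n * ∏ j ∈ Finset.range n, (1 - q ^ (2*ν+2+2*(j:ℝ))))) := by
    intro n
    rw [husplit n ν]
    ring
  have R3 : (∑' n : ℕ,
      ((-1:ℝ)^n * q ^ (2*(n:ℝ)*((n:ℝ)+ν)) * u ^ (2*(n:ℝ)+ν)) /
        (qPoch (q^2) (q^2) n * ∏ j ∈ Finset.range n, (1 - q ^ (2*ν+2+2*(j:ℝ)))))
      = u^ν * ∑' n : ℕ, ((-1:ℝ)^n * q ^ (2*(n:ℝ)*((n:ℝ)+ν)) * (u^2)^n /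
        (qPoch (q^2) (q^2) n * ∏ j ∈ Finset.range n, (1 - q ^ (2*ν+2+2*(j:ℝ))))) := by
    rw [← tsum_mul_left]
    exact tsum_congr step3
  have hXne : 1 - q ^ (2*ν+2) ≠ 0 := by linarith
  have hcore := my_core (w := u^2) hq hq1 hν hw
  have hSh : (∑' n : ℕ, ((-1:ℝ)^n * q ^ (2*(n:ℝ)*((n:ℝ)+ν)) * (u^2)^n /
        (qPoch (q^2) (q^2) n * ∏ j ∈ Finset.range n, (1 - q ^ (2*ν+2+2*(j:ℝ))))))
      = ((∑' n : ℕ, ((-1:ℝ)^n * q ^ (2*(n:ℝ)*((n:ℝ)+ν+1)) * (u^2)^n /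
          (qPoch (q^2) (q^2) n * ∏ j ∈ Finset.range n, (1 - q ^ (2*ν+4+2*(j:ℝ))))))
        - (1+u^2) * (∑' n : ℕ, ((-1:ℝ)^n * q ^ (2*(n:ℝ)*((n:ℝ)+ν+1)+2*(n:ℝ)+2*ν+2) * (u^2)^n /
          (qPoch (q^2) (q^2) n * ∏ j ∈ Finset.range n, (1 - q ^ (2*ν+4+2*(j:ℝ)))))))
        / (1 - q ^ (2*ν+2)) := by
    rw [eq_div_iff hXne]
    linarith [hcore]
  rw [R1, R2, R3, hSh, hPx, hA]
  rw [Real.mul_rpow hq.le hx.le]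
  have hu1 : u^(ν+1) = u^ν * u := by
    rw [Real.rpow_add hupos, Real.rpow_one]
  rw [hu1]
  have h1u2 : (0:ℝ) < 1 + u^2 := by positivity
  field_simp
  have hXne' : 1 - q ^ ((ν+1)*2) ≠ 0 := by
    rw [show (ν+1)*2 = 2*ν+2 by ring]; exact hXne
  rw [mul_div_mul_right _ _ hXne', hu]
  ring
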